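/- Let n ≥ 2 and let M(t) be the real symmetric n×n matrix with all entries fixed except the (1,n) and (n,1) entries, which equal t. Suppose det(M_{1n,1n}) ≠ 0 (for n = 2 interpret this condition as vacuous). Then there exists a real t with det(M(t)) = 0 if and only if det(M_{1,1})·det(M_{n,n}) ≥ 0. -/

import Mathlib

open Matrix

/-- The `(n+2) × (n+2)` symmetric matrix equal to `M₀` everywhere except that
the `(1, n)` and `(n, 1)` entries (here the `(0, last)` and `(last, 0)`
entries) are set to `t`. -/
def cornerMat (n : ℕ) (M₀ : Matrix (Fin (n + 2)) (Fin (n + 2)) ℝ) (t : ℝ) :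
    Matrix (Fin (n + 2)) (Fin (n + 2)) ℝ :=
  Matrix.of fun i j =>
    if (i = 0 ∧ j = Fin.last (n + 1)) ∨ (i = Fin.last (n + 1) ∧ j = 0) then t else M₀ i j

namespace CornerAux

variable (n : ℕ)

/-- middle index embedding -/
def mid (i : Fin n) : Fin (n + 2) := i.succ.castSucc

lemma mid_ne_zero (i : Fin n) : mid n i ≠ 0 := by
  intro h
  have := congrArg Fin.val h
  simp [mid] at this

lemma mid_ne_last (i : Fin n) : mid n i ≠ Fin.last (n + 1) := by
  intro h
  have := congrArg Fin.val h
  simp [mid, Fin.last] at this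
  omega

noncomputable def cornerEquiv : (Fin n ⊕ Fin 2) ≃ Fin (n + 2) :=
  Equiv.ofBijective
    (Sum.elim (mid n) (fun k => if k = 0 then 0 else Fin.last (n + 1)))
    (by
      rw [Fintype.bijective_iff_injective_and_card]
      refine ⟨?_, by simp⟩
      rintro (i | k) (j | l) h
      · simp only [Sum.elim_inl] at h
        have := congrArg Fin.val h
        simp [mid] at this
        exact congrArg Sum.inl (Fin.ext this)
      · exfalso
        simp only [Sum.elim_inl, Sum.elim_inr] at h
        rcases Decidable.eq_or_ne l 0 with rfl | hl
        · simpa using mid_ne_zero n i h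
        · simp [hl] at h; exact mid_ne_last n i h
      · exfalso
        simp only [Sum.elim_inl, Sum.elim_inr] at h
        rcases Decidable.eq_or_ne k 0 with rfl | hk
        · simpa using mid_ne_zero n j h.symm
        · simp [hk] at h; exact mid_ne_last n j h.symm
      · simp only [Sum.elim_inr] at h
        congr 1
        fin_cases k <;> fin_cases l <;> simp_all)


variable (M₀ : Matrix (Fin (n + 2)) (Fin (n + 2)) ℝ)

/-- The middle block. -/
def Nmat : Matrix (Fin n) (Fin n) ℝ := Matrix.of fun i j => M₀ (mid n i) (mid n j)

def uvec : Fin n → ℝ := fun i => M₀ (mid n i) 0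
def vvec : Fin n → ℝ := fun i => M₀ (mid n i) (Fin.last (n + 1))

/-- bilinear form of the inverse middle block -/
noncomputable def S (x y : Fin n → ℝ) : ℝ :=
  ∑ j, (∑ i, x i * (Nmat n M₀)⁻¹ i j) * y j

lemma corner_apply_mid_mid (t : ℝ) (i j : Fin n) :
    cornerMat n M₀ t (mid n i) (mid n j) = Nmat n M₀ i j := by
  simp [cornerMat, Nmat, mid_ne_zero, mid_ne_last]

lemma corner_apply_mid (t : ℝ) (i : Fin n) (j : Fin (n+2)) :
    cornerMat n M₀ t (mid n i) j = M₀ (mid n i) j := by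
  simp [cornerMat, mid_ne_zero, mid_ne_last]

lemma corner_apply_mid' (t : ℝ) (i : Fin (n+2)) (j : Fin n) :
    cornerMat n M₀ t i (mid n j) = M₀ i (mid n j) := by
  simp [cornerMat, mid_ne_zero, mid_ne_last]


lemma inv_symm (hM : M₀.IsSymm) : ∀ i j, (Nmat n M₀)⁻¹ i j = (Nmat n M₀)⁻¹ j i := by
  have hNs : (Nmat n M₀)ᵀ = Nmat n M₀ := by
    ext i j; simp [Nmat, transpose_apply]; exact hM.apply _ _
  intro i j
  have h : ((Nmat n M₀)⁻¹)ᵀ = (Nmat n M₀)⁻¹ := by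
    rw [transpose_nonsing_inv, hNs]
  exact congrFun (congrFun h j) i

lemma S_symm (hM : M₀.IsSymm) (x y : Fin n → ℝ) : S n M₀ x y = S n M₀ y x := by
  simp only [S, Finset.sum_mul]
  rw [Finset.sum_comm]
  refine Finset.sum_congr rfl fun j _ => Finset.sum_congr rfl fun i _ => ?_
  rw [inv_symm n M₀ hM]
  ring


lemma det_eq (hM : M₀.IsSymm) (hN : (Nmat n M₀).det ≠ 0) (t : ℝ) :
    (cornerMat n M₀ t).det =
      (Nmat n M₀).det *
        ((M₀ 0 0 - S n M₀ (uvec n M₀) (uvec n M₀)) *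
          (M₀ (Fin.last (n + 1)) (Fin.last (n + 1)) - S n M₀ (vvec n M₀) (vvec n M₀)) -
          (t - S n M₀ (uvec n M₀) (vvec n M₀)) * (t - S n M₀ (vvec n M₀) (uvec n M₀))) := by
  haveI : Invertible (Nmat n M₀) :=
    (Nmat n M₀).invertibleOfIsUnitDet (isUnit_iff_ne_zero.mpr hN)
  rw [← det_submatrix_equiv_self (cornerEquiv n) (cornerMat n M₀ t)]
  have hblock : (cornerMat n M₀ t).submatrix (cornerEquiv n) (cornerEquiv n) =
      fromBlocks (Nmat n M₀)
        (Matrix.of fun i (k : Fin 2) => if k = 0 then uvec n M₀ i else vvec n M₀ i)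
        (Matrix.of fun (k : Fin 2) i => if k = 0 then uvec n M₀ i else vvec n M₀ i)
        (Matrix.of fun (k l : Fin 2) =>
          if k = 0 then (if l = 0 then M₀ 0 0 else t)
          else (if l = 0 then t else M₀ (Fin.last (n+1)) (Fin.last (n+1)))) := by
    ext (i | k) (j | l)
    · simp [cornerEquiv, submatrix_apply, corner_apply_mid_mid]
    · fin_cases l <;>
        simp [cornerEquiv, submatrix_apply, corner_apply_mid, uvec, vvec]
    · fin_cases k <;>
        simp [cornerEquiv, submatrix_apply, corner_apply_mid', uvec, vvec] <;>
        exact (hM.apply _ _)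
    · fin_cases k <;> fin_cases l <;>
        simp [cornerEquiv, cornerMat, Fin.last, Fin.ext_iff, -Fin.val_eq_zero_iff]
  rw [hblock, det_fromBlocks₁₁, invOf_eq_nonsing_inv, det_fin_two]
  simp only [Matrix.sub_apply, Matrix.mul_apply, Matrix.of_apply, if_true, if_pos, S]
  norm_num


noncomputable def e1 : (Fin n ⊕ Fin 1) ≃ Fin (n + 1) :=
  Equiv.ofBijective (Sum.elim Fin.castSucc (fun _ => Fin.last n))
    (by
      rw [Fintype.bijective_iff_injective_and_card]
      refine ⟨?_, by simp⟩
      rintro (i | k) (j | l) h <;>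
        simp only [Sum.elim_inl, Sum.elim_inr] at h
      · exact congrArg Sum.inl (Fin.castSucc_injective n h)
      · exact absurd h (Fin.castSucc_lt_last i).ne
      · exact absurd h.symm (Fin.castSucc_lt_last j).ne
      · exact congrArg Sum.inr (Subsingleton.elim k l))

noncomputable def e2 : (Fin n ⊕ Fin 1) ≃ Fin (n + 1) :=
  Equiv.ofBijective (Sum.elim Fin.succ (fun _ => 0))
    (by
      rw [Fintype.bijective_iff_injective_and_card]
      refine ⟨?_, by simp⟩
      rintro (i | k) (j | l) h <;>
        simp only [Sum.elim_inl, Sum.elim_inr] at h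
      · exact congrArg Sum.inl (Fin.succ_injective n h)
      · exact absurd h (Fin.succ_ne_zero i)
      · exact absurd h.symm (Fin.succ_ne_zero j)
      · exact congrArg Sum.inr (Subsingleton.elim k l))

lemma det_P (hM : M₀.IsSymm) (hN : (Nmat n M₀).det ≠ 0) :
    ((cornerMat n M₀ 0).submatrix Fin.succ Fin.succ).det =
      (Nmat n M₀).det *
        (M₀ (Fin.last (n + 1)) (Fin.last (n + 1)) - S n M₀ (vvec n M₀) (vvec n M₀)) := by
  haveI : Invertible (Nmat n M₀) :=
    (Nmat n M₀).invertibleOfIsUnitDet (isUnit_iff_ne_zero.mpr hN)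
  rw [← det_submatrix_equiv_self (e1 n) (((cornerMat n M₀ 0)).submatrix Fin.succ Fin.succ)]
  have hblock : (((cornerMat n M₀ 0)).submatrix Fin.succ Fin.succ).submatrix (e1 n) (e1 n) =
      fromBlocks (Nmat n M₀)
        (Matrix.of fun i (_ : Fin 1) => vvec n M₀ i)
        (Matrix.of fun (_ : Fin 1) i => vvec n M₀ i)
        (Matrix.of fun (_ _ : Fin 1) => M₀ (Fin.last (n + 1)) (Fin.last (n + 1))) := by
    ext (i | k) (j | l)
    · have : (Fin.castSucc i).succ = mid n i := Fin.succ_castSucc i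
      have h2 : (Fin.castSucc j).succ = mid n j := Fin.succ_castSucc j
      simp [e1, submatrix_apply, this, h2, corner_apply_mid_mid]
    · have : (Fin.castSucc i).succ = mid n i := Fin.succ_castSucc i
      simp [e1, submatrix_apply, this, Fin.succ_last, corner_apply_mid, vvec]
    · have h2 : (Fin.castSucc j).succ = mid n j := Fin.succ_castSucc j
      simp [e1, submatrix_apply, h2, Fin.succ_last, corner_apply_mid', vvec]
      exact hM.apply _ _
    · simp [e1, submatrix_apply, Fin.succ_last, cornerMat, Fin.last, Fin.ext_iff, -Fin.val_eq_zero_iff]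
  rw [hblock, det_fromBlocks₁₁, invOf_eq_nonsing_inv]
  congr 1
  rw [det_unique]
  simp only [Matrix.sub_apply, Matrix.mul_apply, Matrix.of_apply, S]

lemma det_Q (hM : M₀.IsSymm) (hN : (Nmat n M₀).det ≠ 0) :
    ((cornerMat n M₀ 0).submatrix Fin.castSucc Fin.castSucc).det =
      (Nmat n M₀).det * (M₀ 0 0 - S n M₀ (uvec n M₀) (uvec n M₀)) := by
  haveI : Invertible (Nmat n M₀) :=
    (Nmat n M₀).invertibleOfIsUnitDet (isUnit_iff_ne_zero.mpr hN)
  rw [← det_submatrix_equiv_self (e2 n) (((cornerMat n M₀ 0)).submatrix Fin.castSucc Fin.castSucc)]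
  have hblock : (((cornerMat n M₀ 0)).submatrix Fin.castSucc Fin.castSucc).submatrix (e2 n) (e2 n) =
      fromBlocks (Nmat n M₀)
        (Matrix.of fun i (_ : Fin 1) => uvec n M₀ i)
        (Matrix.of fun (_ : Fin 1) i => uvec n M₀ i)
        (Matrix.of fun (_ _ : Fin 1) => M₀ 0 0) := by
    ext (i | k) (j | l) <;>
      simp only [submatrix_apply, e2, Equiv.ofBijective_apply, Sum.elim_inl, Sum.elim_inr,
        fromBlocks_apply₁₁, fromBlocks_apply₁₂, fromBlocks_apply₂₁, fromBlocks_apply₂₂,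
        Matrix.of_apply, Fin.castSucc_zero]
    · exact corner_apply_mid_mid n M₀ 0 i j
    · exact corner_apply_mid n M₀ 0 i 0
    · exact (corner_apply_mid' n M₀ 0 0 j).trans (hM.apply _ _)
    · simp [cornerMat, Fin.last, Fin.ext_iff, -Fin.val_eq_zero_iff]
  rw [hblock, det_fromBlocks₁₁, invOf_eq_nonsing_inv]
  congr 1
  rw [det_unique]
  simp only [Matrix.sub_apply, Matrix.mul_apply, Matrix.of_apply, S]

end CornerAux

/-- If `det(M_{1n,1n}) ≠ 0`, then `det M(t) = 0` for some real `t` if and only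
if `det(M_{1,1}) · det(M_{n,n}) ≥ 0`. -/
theorem exists_root_det_corner_of_ne_zero (n : ℕ)
    (M₀ : Matrix (Fin (n + 2)) (Fin (n + 2)) ℝ) (hM : M₀.IsSymm)
    (hmid : ((cornerMat n M₀ 0).submatrix
        (fun i : Fin n => (i.succ.castSucc : Fin (n + 2)))
        (fun j : Fin n => (j.succ.castSucc : Fin (n + 2)))).det ≠ 0) :
    (∃ t : ℝ, (cornerMat n M₀ t).det = 0) ↔
      0 ≤ ((cornerMat n M₀ 0).submatrix Fin.succ Fin.succ).det
        * ((cornerMat n M₀ 0).submatrix Fin.castSucc Fin.castSucc).det := by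
  have hN : (CornerAux.Nmat n M₀).det ≠ 0 := by
    have h : (cornerMat n M₀ 0).submatrix
        (fun i : Fin n => (i.succ.castSucc : Fin (n + 2)))
        (fun j : Fin n => (j.succ.castSucc : Fin (n + 2))) = CornerAux.Nmat n M₀ := by
      ext i j; exact CornerAux.corner_apply_mid_mid n M₀ 0 i j
    rwa [h] at hmid
  set d := (CornerAux.Nmat n M₀).det with hd
  set a := M₀ 0 0 with ha
  set c := M₀ (Fin.last (n + 1)) (Fin.last (n + 1)) with hc
  set Suu := CornerAux.S n M₀ (CornerAux.uvec n M₀) (CornerAux.uvec n M₀) with hSuu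
  set Svv := CornerAux.S n M₀ (CornerAux.vvec n M₀) (CornerAux.vvec n M₀) with hSvv
  set Suv := CornerAux.S n M₀ (CornerAux.uvec n M₀) (CornerAux.vvec n M₀) with hSuv
  have hdet : ∀ t : ℝ, (cornerMat n M₀ t).det =
      d * ((a - Suu) * (c - Svv) - (t - Suv) * (t - Suv)) := by
    intro t
    rw [CornerAux.det_eq n M₀ hM hN t,
      CornerAux.S_symm n M₀ hM (CornerAux.vvec n M₀) (CornerAux.uvec n M₀)]
  rw [CornerAux.det_P n M₀ hM hN, CornerAux.det_Q n M₀ hM hN]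
  constructor
  · rintro ⟨t, ht⟩
    rw [hdet t] at ht
    have h1 : (a - Suu) * (c - Svv) = (t - Suv) * (t - Suv) := by
      rcases mul_eq_zero.mp ht with h | h
      · exact absurd h hN
      · linarith
    nlinarith [sq_nonneg (t - Suv), sq_nonneg d]
  · intro h
    have h3 : 0 < d ^ 2 := by positivity
    have hprod : 0 ≤ (a - Suu) * (c - Svv) := by nlinarith [h, h3]
    refine ⟨Suv + Real.sqrt ((a - Suu) * (c - Svv)), ?_⟩
    rw [hdet]
    have hs : Suv + Real.sqrt ((a - Suu) * (c - Svv)) - Suv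
        = Real.sqrt ((a - Suu) * (c - Svv)) := by ring
    rw [hs, Real.mul_self_sqrt hprod]
    ring
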